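/- Let H_3(y) = (y/2 + 1) · ln(1 + (3/y)·(1 + √(2(3+y)/(3(y−2))))). Then H_3 is strictly decreasing on [12, ∞), and H_3(3) > H_3(4) > H_3(5) > H_3(6) > H_3(7) > H_3(8) > H_3(9) > H_3(10) > H_3(11) > H_3(12); consequently, for every integer d2 ≥ 5, H_3(d2) < H_3(d2 − 2). -/

import Mathlib

/-- `H₃(y) = (y/2 + 1) · ln(1 + (3/y)(1 + √(2(3+y)/(3(y−2)))))`. -/
noncomputable def H3 (y : ℝ) : ℝ :=
  (y / 2 + 1) * Real.log (1 + (3 / y) * (1 + Real.sqrt (2 * (3 + y) / (3 * (y - 2)))))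


lemma two_log_le {x : ℝ} (hx : 1 ≤ x) : 2 * Real.log x ≤ x - 1/x := by
  have key : ∀ z : ℝ, z ∈ Set.Ici (1:ℝ) →
      HasDerivAt (fun w : ℝ => w - 1/w - 2 * Real.log w) (1 + 1/z^2 - 2/z) z := by
    intro z hz
    have hz0 : (0:ℝ) < z := lt_of_lt_of_le one_pos hz
    have h1 : HasDerivAt (fun w : ℝ => w - 1/w) (1 - -(z^2)⁻¹) z := by
      simpa [one_div] using (hasDerivAt_id' z).fun_sub (hasDerivAt_inv hz0.ne')
    have h2 : HasDerivAt (fun w : ℝ => 2 * Real.log w) (2 * z⁻¹) z :=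
      (Real.hasDerivAt_log hz0.ne').const_mul 2
    have := h1.sub h2
    refine this.congr_deriv ?_
    field_simp; ring
  have mono : MonotoneOn (fun w : ℝ => w - 1/w - 2 * Real.log w) (Set.Ici 1) := by
    apply monotoneOn_of_deriv_nonneg (convex_Ici 1)
    · exact fun z hz => ((key z hz).continuousAt).continuousWithinAt
    · intro z hz
      rw [interior_Ici] at hz
      exact ((key z (Set.mem_Ici.2 (le_of_lt hz))).differentiableAt).differentiableWithinAt
    · intro z hz
      rw [interior_Ici] at hz
      have hz0 : (0:ℝ) < z := lt_trans one_pos hz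
      rw [(key z (Set.mem_Ici.2 (le_of_lt hz))).deriv]
      have : 1 + 1/z^2 - 2/z = (1 - 1/z)^2 := by field_simp; ring
      rw [this]; positivity
  have h := mono (Set.self_mem_Ici) hx hx
  simp only [Real.log_one] at h
  norm_num at h
  simp only [one_div] at h ⊢
  linarith

lemma log_step {A B : ℝ} {m n : ℕ} (hB : 0 < B) (h : B ^ n < A ^ m) :
    (n:ℝ) * Real.log B < (m:ℝ) * Real.log A := by
  rw [← Real.log_pow, ← Real.log_pow]
  exact Real.log_lt_log (pow_pos hB n) h

lemma glue (a b Aa Ab L U : ℝ) (m n : ℕ) (hm : (m:ℝ) = a + 2) (hn : (n:ℝ) = b + 2)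
    (hL : 1 ≤ L) (hLA : L ≤ Aa) (hAb : 0 < Ab) (hU : Ab ≤ U) (hpow : U ^ n < L ^ m) :
    (b/2+1) * Real.log Ab < (a/2+1) * Real.log Aa := by
  have hL0 : (0:ℝ) < L := lt_of_lt_of_le one_pos hL
  have hU0 : (0:ℝ) < U := lt_of_lt_of_le hAb hU
  have h1 : (n:ℝ) * Real.log U < (m:ℝ) * Real.log L := log_step hU0 hpow
  have h2 : Real.log Ab ≤ Real.log U := Real.log_le_log hAb hU
  have h3 : Real.log L ≤ Real.log Aa := Real.log_le_log hL0 hLA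
  have hb2 : b/2 + 1 = (n:ℝ)/2 := by rw [hn]; ring
  have ha2 : a/2 + 1 = (m:ℝ)/2 := by rw [hm]; ring
  rw [hb2, ha2]
  have hn0 : (0:ℝ) ≤ (n:ℝ)/2 := by positivity
  have hm0 : (0:ℝ) ≤ (m:ℝ)/2 := by positivity
  nlinarith [mul_le_mul_of_nonneg_left h2 hn0, mul_le_mul_of_nonneg_left h3 hm0]



noncomputable def S (y : ℝ) : ℝ := Real.sqrt (2 * (3 + y) / (3 * (y - 2)))

noncomputable def Fd (y : ℝ) : ℝ :=
  (-3/y^2) * (1 + S y) + (3/y) * (-10/(3*(y-2)^2) / (2 * S y))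

noncomputable def Dv (y : ℝ) : ℝ :=
  1/2 * Real.log (1 + 3/y * (1 + S y)) + (y/2+1) * (Fd y / (1 + 3/y * (1 + S y)))

lemma H3_hasDeriv (y : ℝ) (hy : 2 < y) : HasDerivAt H3 (Dv y) y := by
  have hy0 : (0:ℝ) < y := by linarith
  have hy2 : (0:ℝ) < y - 2 := by linarith
  have hden : 3*(y-2) ≠ 0 := by positivity
  have huv : (0:ℝ) < 2*(3+y)/(3*(y-2)) := by positivity
  have hu : HasDerivAt (fun z : ℝ => 2*(3+z)/(3*(z-2))) (-10/(3*(y-2)^2)) y := by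
    have h1 : HasDerivAt (fun z : ℝ => 2*(3+z)) 2 y := by
      simpa using ((hasDerivAt_const y (3:ℝ)).add (hasDerivAt_id y)).const_mul 2
    have h2 : HasDerivAt (fun z : ℝ => 3*(z-2)) 3 y := by
      simpa using ((hasDerivAt_id y).sub_const 2).const_mul 3
    have h := h1.div h2 hden
    refine h.congr_deriv ?_
    field_simp
    ring
  have hS : HasDerivAt (fun z : ℝ => Real.sqrt (2*(3+z)/(3*(z-2))))
      (-10/(3*(y-2)^2) / (2 * S y)) y := hu.sqrt huv.ne'
  have h3y : HasDerivAt (fun z : ℝ => 3/z) (-3/y^2) y := by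
    have := (hasDerivAt_inv hy0.ne').const_mul 3
    refine this.congr_deriv ?_
    field_simp
  have hSpos : 0 < S y := Real.sqrt_pos.2 huv
  have hF : HasDerivAt (fun z : ℝ => 1 + 3/z * (1 + Real.sqrt (2*(3+z)/(3*(z-2))))) (Fd y) y := by
    have := (h3y.mul ((hasDerivAt_const y (1:ℝ)).add hS)).const_add 1
    refine this.congr_deriv ?_
    simp only [Pi.add_apply]
    unfold Fd S
    ring
  have hFpos : (0:ℝ) < 1 + 3/y * (1 + S y) := by positivity
  have hlog : HasDerivAt (fun z : ℝ => Real.log (1 + 3/z * (1 + Real.sqrt (2*(3+z)/(3*(z-2))))))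
      (Fd y / (1 + 3/y * (1 + S y))) y := by
    have := hF.log hFpos.ne'
    exact this
  have hlin : HasDerivAt (fun z : ℝ => z/2 + 1) (1/2) y := by
    simpa using ((hasDerivAt_id y).div_const 2).add_const 1
  have hfinal := hlin.mul hlog
  have heq : H3 = fun z : ℝ =>
      (z/2+1) * Real.log (1 + 3/z * (1 + Real.sqrt (2*(3+z)/(3*(z-2))))) := rfl
  rw [heq]
  exact hfinal

lemma Dv_neg (y : ℝ) (hy : 12 < y) : Dv y < 0 := by
  have hy0 : (0:ℝ) < y := by linarith
  have hy2 : (0:ℝ) < y - 2 := by linarith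
  have huv : (0:ℝ) < 2*(3+y)/(3*(y-2)) := by positivity
  set s : ℝ := S y with hsdef
  have hs0 : 0 < s := Real.sqrt_pos.2 huv
  have hrel : s^2 = 2*(3+y)/(3*(y-2)) := Real.sq_sqrt huv.le
  have hrel' : s^2 * (3*(y-2)) = 2*(3+y) := by
    rw [hrel]; field_simp
  clear_value s
  have hsq : s^2 ≤ 1 := by
    rw [hrel, div_le_one (by positivity)]; linarith
  have hs1 : s ≤ 1 := by nlinarith
  -- algebraic identities
  have h10 : (3*s^2-2)*(y-2) = 10 := by linear_combination hrel'
  have h32 : 0 < 3*s^2-2 := by nlinarith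
  have hy6 : y*(3*s^2-2) = 6*s^2+6 := by linear_combination hrel'
  have hy12 : (y+2)*(3*s^2-2) = 12*s^2+2 := by linear_combination hrel'
  have hpoly : 0 < 12*s^4 - 15*s^3 + 4*s^2 + 5*s + 2 := by
    nlinarith [sq_nonneg (s-1), sq_nonneg s, sq_nonneg (s^2-s), mul_pos hs0 hs0]
  have hs' : 300*(s*(1+s)*(3*s-1)) < 10*((6*s^2+6)*(12*s^2+2)) := by nlinarith [hpoly]
  have hL : 3*(1+s)*(3*s-1)*(y-2)^2*s*(3*s^2-2)^2 = 300*(s*(1+s)*(3*s-1)) := by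
    linear_combination (3*(1+s)*(3*s-1)*s*((y-2)*(3*s^2-2)+10)) * h10
  have hR : 10*y*(y+2)*(3*s^2-2)^2 = 10*((6*s^2+6)*(12*s^2+2)) := by
    linear_combination (10*(y+2)*(3*s^2-2))*hy6 + (10*(6*s^2+6))*hy12
  have h32sq : (0:ℝ) < (3*s^2-2)^2 := by positivity
  have hclear' : 3*(1+s)*(3*s-1)*(y-2)^2*s < 10*y*(y+2) := by
    have hmul : 3*(1+s)*(3*s-1)*(y-2)^2*s*(3*s^2-2)^2 < 10*y*(y+2)*(3*s^2-2)^2 := by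
      rw [hL, hR]; exact hs'
    nlinarith [hmul, h32sq]
  have hclear : 9*(1+s)^2*(y-2)^2*s + 6*y*(1+s)*(y-2)^2*s
      < 2*(y+2)*(3*(1+s)*(y-2)^2*s + 5*y) := by nlinarith [hclear']
  -- now clear denominators
  set F : ℝ := 1 + 3/y * (1 + s) with hFdef
  clear_value F
  have hF1 : 1 < F := by
    have : 0 < 3/y * (1+s) := by positivity
    simp only [hFdef]; linarith
  have hF0 : (0:ℝ) < F := by linarith
  have hMpos : (0:ℝ) < y^2*(y-2)^2*s := by positivity
  have eF : F^2 - 1 = (6*y*(1+s)*(y-2)^2*s + 9*(1+s)^2*(y-2)^2*s) / (y^2*(y-2)^2*s) := by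
    rw [hFdef]; field_simp; ring
  have eFd : (2*y+4)*(-Fd y) = (2*(y+2)*(3*(1+s)*(y-2)^2*s + 5*y)) / (y^2*(y-2)^2*s) := by
    unfold Fd
    rw [← hsdef]
    field_simp
    ring
  have hmain : F^2 - 1 < (2*y+4)*(-Fd y) := by
    rw [eF, eFd]
    gcongr
    linarith [hclear]
  -- trapezoid bound
  have hlog2 : Real.log F ≤ (F - 1/F)/2 := by linarith [two_log_le hF1.le]
  have hkey : (y/2+1) * (Fd y / F) < -((F - 1/F)/4) := by
    have e1 : (y/2+1) * (Fd y / F) = ((y/2+1) * Fd y)/F := by ring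
    have e2 : -((F - 1/F)/4) = (-(F^2-1)/4)/F := by field_simp
    rw [e1, e2]
    gcongr
    linarith [hmain]
  have : Dv y = 1/2 * Real.log F + (y/2+1) * (Fd y / F) := by
    unfold Dv
    rw [← hsdef, ← hFdef]
  rw [this]
  linarith [hlog2, hkey]

lemma comp_3_4 : H3 4 < H3 3 := by
  have hsa : (1999999/1000000 : ℝ) < Real.sqrt (2 * (3 + (3:ℝ)) / (3 * ((3:ℝ) - 2))) := by
    rw [show 2 * (3 + (3:ℝ)) / (3 * ((3:ℝ) - 2)) = (4 : ℝ) by norm_num]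
    rw [show (1999999/1000000 : ℝ) = Real.sqrt ((1999999/1000000 : ℝ)^2) by rw [Real.sqrt_sq (by norm_num)]]
    apply Real.sqrt_lt_sqrt (by positivity)
    norm_num
  have hsb : Real.sqrt (2 * (3 + (4:ℝ)) / (3 * ((4:ℝ) - 2))) < (190941/125000 : ℝ) := by
    rw [show 2 * (3 + (4:ℝ)) / (3 * ((4:ℝ) - 2)) = (7/3 : ℝ) by norm_num]
    rw [show ((190941/125000 : ℝ):ℝ) = Real.sqrt ((190941/125000 : ℝ)^2) by rw [Real.sqrt_sq (by norm_num)]]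
    apply Real.sqrt_lt_sqrt (by positivity)
    norm_num
  unfold H3
  apply glue 3 4 _ _ (3999999/1000000 : ℝ) (1447823/500000 : ℝ) 5 6 (by norm_num) (by norm_num)
    (by norm_num) (by linarith) (by positivity) (by linarith)
  norm_num

lemma comp_4_5 : H3 5 < H3 4 := by
  have hsa : (61101/40000 : ℝ) < Real.sqrt (2 * (3 + (4:ℝ)) / (3 * ((4:ℝ) - 2))) := by
    rw [show 2 * (3 + (4:ℝ)) / (3 * ((4:ℝ) - 2)) = (7/3 : ℝ) by norm_num]
    rw [show (61101/40000 : ℝ) = Real.sqrt ((61101/40000 : ℝ)^2) by rw [Real.sqrt_sq (by norm_num)]]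
    apply Real.sqrt_lt_sqrt (by positivity)
    norm_num
  have hsb : Real.sqrt (2 * (3 + (5:ℝ)) / (3 * ((5:ℝ) - 2))) < (166667/125000 : ℝ) := by
    rw [show 2 * (3 + (5:ℝ)) / (3 * ((5:ℝ) - 2)) = (16/9 : ℝ) by norm_num]
    rw [show ((166667/125000 : ℝ):ℝ) = Real.sqrt ((166667/125000 : ℝ)^2) by rw [Real.sqrt_sq (by norm_num)]]
    apply Real.sqrt_lt_sqrt (by positivity)
    norm_num
  unfold H3
  apply glue 4 5 _ _ (463303/160000 : ℝ) (1500001/625000 : ℝ) 6 7 (by norm_num) (by norm_num)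
    (by norm_num) (by linarith) (by positivity) (by linarith)
  norm_num

lemma comp_5_6 : H3 6 < H3 5 := by
  have hsa : (1333333/1000000 : ℝ) < Real.sqrt (2 * (3 + (5:ℝ)) / (3 * ((5:ℝ) - 2))) := by
    rw [show 2 * (3 + (5:ℝ)) / (3 * ((5:ℝ) - 2)) = (16/9 : ℝ) by norm_num]
    rw [show (1333333/1000000 : ℝ) = Real.sqrt ((1333333/1000000 : ℝ)^2) by rw [Real.sqrt_sq (by norm_num)]]
    apply Real.sqrt_lt_sqrt (by positivity)
    norm_num
  have hsb : Real.sqrt (2 * (3 + (6:ℝ)) / (3 * ((6:ℝ) - 2))) < (1224747/1000000 : ℝ) := by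
    rw [show 2 * (3 + (6:ℝ)) / (3 * ((6:ℝ) - 2)) = (3/2 : ℝ) by norm_num]
    rw [show ((1224747/1000000 : ℝ):ℝ) = Real.sqrt ((1224747/1000000 : ℝ)^2) by rw [Real.sqrt_sq (by norm_num)]]
    apply Real.sqrt_lt_sqrt (by positivity)
    norm_num
  unfold H3
  apply glue 5 6 _ _ (11999999/5000000 : ℝ) (4224747/2000000 : ℝ) 7 8 (by norm_num) (by norm_num)
    (by norm_num) (by linarith) (by positivity) (by linarith)
  norm_num

lemma comp_6_7 : H3 7 < H3 6 := by
  have hsa : (153093/125000 : ℝ) < Real.sqrt (2 * (3 + (6:ℝ)) / (3 * ((6:ℝ) - 2))) := by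
    rw [show 2 * (3 + (6:ℝ)) / (3 * ((6:ℝ) - 2)) = (3/2 : ℝ) by norm_num]
    rw [show (153093/125000 : ℝ) = Real.sqrt ((153093/125000 : ℝ)^2) by rw [Real.sqrt_sq (by norm_num)]]
    apply Real.sqrt_lt_sqrt (by positivity)
    norm_num
  have hsb : Real.sqrt (2 * (3 + (7:ℝ)) / (3 * ((7:ℝ) - 2))) < (1154703/1000000 : ℝ) := by
    rw [show 2 * (3 + (7:ℝ)) / (3 * ((7:ℝ) - 2)) = (4/3 : ℝ) by norm_num]
    rw [show ((1154703/1000000 : ℝ):ℝ) = Real.sqrt ((1154703/1000000 : ℝ)^2) by rw [Real.sqrt_sq (by norm_num)]]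
    apply Real.sqrt_lt_sqrt (by positivity)
    norm_num
  unfold H3
  apply glue 6 7 _ _ (528093/250000 : ℝ) (13464109/7000000 : ℝ) 8 9 (by norm_num) (by norm_num)
    (by norm_num) (by linarith) (by positivity) (by linarith)
  norm_num

lemma comp_7_8 : H3 8 < H3 7 := by
  have hsa : (11547/10000 : ℝ) < Real.sqrt (2 * (3 + (7:ℝ)) / (3 * ((7:ℝ) - 2))) := by
    rw [show 2 * (3 + (7:ℝ)) / (3 * ((7:ℝ) - 2)) = (4/3 : ℝ) by norm_num]
    rw [show (11547/10000 : ℝ) = Real.sqrt ((11547/10000 : ℝ)^2) by rw [Real.sqrt_sq (by norm_num)]]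
    apply Real.sqrt_lt_sqrt (by positivity)
    norm_num
  have hsb : Real.sqrt (2 * (3 + (8:ℝ)) / (3 * ((8:ℝ) - 2))) < (138193/125000 : ℝ) := by
    rw [show 2 * (3 + (8:ℝ)) / (3 * ((8:ℝ) - 2)) = (11/9 : ℝ) by norm_num]
    rw [show ((138193/125000 : ℝ):ℝ) = Real.sqrt ((138193/125000 : ℝ)^2) by rw [Real.sqrt_sq (by norm_num)]]
    apply Real.sqrt_lt_sqrt (by positivity)
    norm_num
  unfold H3
  apply glue 7 8 _ _ (134641/70000 : ℝ) (1789579/1000000 : ℝ) 9 10 (by norm_num) (by norm_num)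
    (by norm_num) (by linarith) (by positivity) (by linarith)
  norm_num

lemma comp_8_9 : H3 9 < H3 8 := by
  have hsa : (1105541/1000000 : ℝ) < Real.sqrt (2 * (3 + (8:ℝ)) / (3 * ((8:ℝ) - 2))) := by
    rw [show 2 * (3 + (8:ℝ)) / (3 * ((8:ℝ) - 2)) = (11/9 : ℝ) by norm_num]
    rw [show (1105541/1000000 : ℝ) = Real.sqrt ((1105541/1000000 : ℝ)^2) by rw [Real.sqrt_sq (by norm_num)]]
    apply Real.sqrt_lt_sqrt (by positivity)
    norm_num
  have hsb : Real.sqrt (2 * (3 + (9:ℝ)) / (3 * ((9:ℝ) - 2))) < (1069047/1000000 : ℝ) := by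
    rw [show 2 * (3 + (9:ℝ)) / (3 * ((9:ℝ) - 2)) = (8/7 : ℝ) by norm_num]
    rw [show ((1069047/1000000 : ℝ):ℝ) = Real.sqrt ((1069047/1000000 : ℝ)^2) by rw [Real.sqrt_sq (by norm_num)]]
    apply Real.sqrt_lt_sqrt (by positivity)
    norm_num
  unfold H3
  apply glue 8 9 _ _ (14316623/8000000 : ℝ) (5069047/3000000 : ℝ) 10 11 (by norm_num) (by norm_num)
    (by norm_num) (by linarith) (by positivity) (by linarith)
  norm_num

lemma comp_9_10 : H3 10 < H3 9 := by
  have hsa : (267261/250000 : ℝ) < Real.sqrt (2 * (3 + (9:ℝ)) / (3 * ((9:ℝ) - 2))) := by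
    rw [show 2 * (3 + (9:ℝ)) / (3 * ((9:ℝ) - 2)) = (8/7 : ℝ) by norm_num]
    rw [show (267261/250000 : ℝ) = Real.sqrt ((267261/250000 : ℝ)^2) by rw [Real.sqrt_sq (by norm_num)]]
    apply Real.sqrt_lt_sqrt (by positivity)
    norm_num
  have hsb : Real.sqrt (2 * (3 + (10:ℝ)) / (3 * ((10:ℝ) - 2))) < (208167/200000 : ℝ) := by
    rw [show 2 * (3 + (10:ℝ)) / (3 * ((10:ℝ) - 2)) = (13/12 : ℝ) by norm_num]
    rw [show ((208167/200000 : ℝ):ℝ) = Real.sqrt ((208167/200000 : ℝ)^2) by rw [Real.sqrt_sq (by norm_num)]]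
    apply Real.sqrt_lt_sqrt (by positivity)
    norm_num
  unfold H3
  apply glue 9 10 _ _ (1267261/750000 : ℝ) (3224501/2000000 : ℝ) 11 12 (by norm_num) (by norm_num)
    (by norm_num) (by linarith) (by positivity) (by linarith)
  norm_num

lemma comp_10_11 : H3 11 < H3 10 := by
  have hsa : (16263/15625 : ℝ) < Real.sqrt (2 * (3 + (10:ℝ)) / (3 * ((10:ℝ) - 2))) := by
    rw [show 2 * (3 + (10:ℝ)) / (3 * ((10:ℝ) - 2)) = (13/12 : ℝ) by norm_num]
    rw [show (16263/15625 : ℝ) = Real.sqrt ((16263/15625 : ℝ)^2) by rw [Real.sqrt_sq (by norm_num)]]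
    apply Real.sqrt_lt_sqrt (by positivity)
    norm_num
  have hsb : Real.sqrt (2 * (3 + (11:ℝ)) / (3 * ((11:ℝ) - 2))) < (1018353/1000000 : ℝ) := by
    rw [show 2 * (3 + (11:ℝ)) / (3 * ((11:ℝ) - 2)) = (28/27 : ℝ) by norm_num]
    rw [show ((1018353/1000000 : ℝ):ℝ) = Real.sqrt ((1018353/1000000 : ℝ)^2) by rw [Real.sqrt_sq (by norm_num)]]
    apply Real.sqrt_lt_sqrt (by positivity)
    norm_num
  unfold H3
  apply glue 10 11 _ _ (125957/78125 : ℝ) (17055059/11000000 : ℝ) 12 13 (by norm_num) (by norm_num)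
    (by norm_num) (by linarith) (by positivity) (by linarith)
  norm_num

lemma comp_11_12 : H3 12 < H3 11 := by
  have hsa : (20367/20000 : ℝ) < Real.sqrt (2 * (3 + (11:ℝ)) / (3 * ((11:ℝ) - 2))) := by
    rw [show 2 * (3 + (11:ℝ)) / (3 * ((11:ℝ) - 2)) = (28/27 : ℝ) by norm_num]
    rw [show (20367/20000 : ℝ) = Real.sqrt ((20367/20000 : ℝ)^2) by rw [Real.sqrt_sq (by norm_num)]]
    apply Real.sqrt_lt_sqrt (by positivity)
    norm_num
  have hsb : Real.sqrt (2 * (3 + (12:ℝ)) / (3 * ((12:ℝ) - 2))) < (500001/500000 : ℝ) := by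
    rw [show 2 * (3 + (12:ℝ)) / (3 * ((12:ℝ) - 2)) = (1 : ℝ) by norm_num]
    rw [show ((500001/500000 : ℝ):ℝ) = Real.sqrt ((500001/500000 : ℝ)^2) by rw [Real.sqrt_sq (by norm_num)]]
    apply Real.sqrt_lt_sqrt (by positivity)
    norm_num
  unfold H3
  apply glue 11 12 _ _ (341101/220000 : ℝ) (3000001/2000000 : ℝ) 13 14 (by norm_num) (by norm_num)
    (by norm_num) (by linarith) (by positivity) (by linarith)
  norm_num


theorem H3_decreasing :
    StrictAntiOn H3 (Set.Ici (12 : ℝ)) ∧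
      H3 3 > H3 4 ∧ H3 4 > H3 5 ∧ H3 5 > H3 6 ∧ H3 6 > H3 7 ∧ H3 7 > H3 8 ∧
      H3 8 > H3 9 ∧ H3 9 > H3 10 ∧ H3 10 > H3 11 ∧ H3 11 > H3 12 ∧
      ∀ d2 : ℕ, 5 ≤ d2 → H3 (d2 : ℝ) < H3 ((d2 : ℝ) - 2) := by
  have anti : StrictAntiOn H3 (Set.Ici (12 : ℝ)) := by
    apply strictAntiOn_of_deriv_neg (convex_Ici _)
    · intro x hx
      have hx12 : (12:ℝ) ≤ x := hx
      exact (H3_hasDeriv x (by linarith)).continuousAt.continuousWithinAt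
    · intro x hx
      rw [interior_Ici] at hx
      have hx12 : (12:ℝ) < x := hx
      rw [(H3_hasDeriv x (by linarith)).deriv]
      exact Dv_neg x hx12
  have h1312 : H3 13 < H3 12 :=
    anti (Set.mem_Ici.2 (by norm_num)) (Set.mem_Ici.2 (by norm_num)) (by norm_num)
  refine ⟨anti, comp_3_4, comp_4_5, comp_5_6, comp_6_7, comp_7_8, comp_8_9, comp_9_10,
    comp_10_11, comp_11_12, ?_⟩
  intro d2 hd2
  rcases le_or_gt d2 13 with h | h
  · interval_cases d2
    · convert (comp_4_5.trans comp_3_4 : H3 5 < H3 3) using 2 <;> norm_num <;> rfl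
    · convert (comp_5_6.trans comp_4_5 : H3 6 < H3 4) using 2 <;> norm_num <;> rfl
    · convert (comp_6_7.trans comp_5_6 : H3 7 < H3 5) using 2 <;> norm_num <;> rfl
    · convert (comp_7_8.trans comp_6_7 : H3 8 < H3 6) using 2 <;> norm_num <;> rfl
    · convert (comp_8_9.trans comp_7_8 : H3 9 < H3 7) using 2 <;> norm_num <;> rfl
    · convert (comp_9_10.trans comp_8_9 : H3 10 < H3 8) using 2 <;> norm_num <;> rfl
    · convert (comp_10_11.trans comp_9_10 : H3 11 < H3 9) using 2 <;> norm_num <;> rfl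
    · convert (comp_11_12.trans comp_10_11 : H3 12 < H3 10) using 2 <;> norm_num <;> rfl
    · convert (h1312.trans comp_11_12 : H3 13 < H3 11) using 2 <;> norm_num <;> rfl
  · have h14 : 14 ≤ d2 := h
    have hc : (14:ℝ) ≤ (d2:ℝ) := by exact_mod_cast h14
    exact anti (Set.mem_Ici.2 (by linarith)) (Set.mem_Ici.2 (by linarith)) (by linarith)
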